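/- Let 𝒞 be a t-error-correcting Z2Z4-additive code of type (α,β;γ,δ;κ) with γ = κ, parity check matrix ℋ in the form (5), and let C = Φ(𝒞) with standard information set J. If y = x + e ∈ F2^{α+2β} with x ∈ C and wt(e) ≤ t, then wt_L(ℋ Φ^{-1}(y)ᵀ) ≤ t if and only if wt(e_J) = 0. -/

import Mathlib

/-- The ambient group Z2^α × Z4^β. -/
abbrev Vab (α β : ℕ) := (Fin α → ZMod 2) × (Fin β → ZMod 4)

/-- The Gray map φ : Z4 → Z2². -/
def gray (a : ZMod 4) : ZMod 2 × ZMod 2 :=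
  if a = 0 then (0, 0) else if a = 1 then (0, 1) else if a = 2 then (1, 1) else (1, 0)

/-- The componentwise Gray map Φ : Z2^{n1} × Z4^{n2} → F2^{n1+2n2}. -/
def Phi (n1 n2 : ℕ) (u : Vab n1 n2) : Fin (n1 + 2 * n2) → ZMod 2 := fun i =>
  if h : (i : ℕ) < n1 then u.1 ⟨i, h⟩
  else
    have hj : ((i : ℕ) - n1) / 2 < n2 := by have := i.isLt; omega
    if ((i : ℕ) - n1) % 2 = 0 then (gray (u.2 ⟨((i : ℕ) - n1) / 2, hj⟩)).1
    else (gray (u.2 ⟨((i : ℕ) - n1) / 2, hj⟩)).2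

/-- The natural inclusion of Z2 = {0,1} into Z4. -/
def toZ4 (a : ZMod 2) : ZMod 4 := a.val

/-- Reduction mod 2 of Z4. -/
def toZ2 (a : ZMod 4) : ZMod 2 := a.val

lemma gray_injective : Function.Injective gray := by decide

lemma Phi_lt {n1 n2 : ℕ} (u : Vab n1 n2) (i : Fin (n1 + 2 * n2)) (h : (i : ℕ) < n1) :
    Phi n1 n2 u i = u.1 ⟨i, h⟩ := by simp [Phi, h]

lemma Phi_even {n1 n2 : ℕ} (u : Vab n1 n2) (i : Fin (n1 + 2 * n2)) (q : Fin n2)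
    (h : (i : ℕ) = n1 + 2 * (q : ℕ)) : Phi n1 n2 u i = (gray (u.2 q)).1 := by
  have h1 : ¬ (i : ℕ) < n1 := by omega
  have h2 : ((i : ℕ) - n1) % 2 = 0 := by omega
  have h3 : ((i : ℕ) - n1) / 2 = (q : ℕ) := by omega
  simp only [Phi, dif_neg h1, if_pos h2, h3, Fin.eta]

lemma Phi_odd {n1 n2 : ℕ} (u : Vab n1 n2) (i : Fin (n1 + 2 * n2)) (q : Fin n2)
    (h : (i : ℕ) = n1 + 2 * (q : ℕ) + 1) : Phi n1 n2 u i = (gray (u.2 q)).2 := by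
  have h1 : ¬ (i : ℕ) < n1 := by omega
  have h2 : ¬ ((i : ℕ) - n1) % 2 = 0 := by omega
  have h3 : ((i : ℕ) - n1) / 2 = (q : ℕ) := by omega
  simp only [Phi, dif_neg h1, if_neg h2, h3, Fin.eta]

lemma sum_range_two_mul (g : ℕ → ℕ) (B : ℕ) :
    ∑ i ∈ Finset.range (2 * B), g i = ∑ q ∈ Finset.range B, (g (2 * q) + g (2 * q + 1)) := by
  induction B with
  | zero => simp
  | succ n ih =>
    have h2 : 2 * (n + 1) = (2 * n + 1) + 1 := by ring
    rw [h2, Finset.sum_range_succ, Finset.sum_range_succ, ih, Finset.sum_range_succ]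
    omega

lemma fin_sum_two_mul (B : ℕ) (g : Fin (2 * B) → ℕ) :
    ∑ i, g i = ∑ q : Fin B,
      (g ⟨2 * (q : ℕ), by have := q.isLt; omega⟩ +
       g ⟨2 * (q : ℕ) + 1, by have := q.isLt; omega⟩) := by
  classical
  let G : ℕ → ℕ := fun n => if h : n < 2 * B then g ⟨n, h⟩ else 0
  have h1 : ∑ i, g i = ∑ i ∈ Finset.range (2 * B), G i := by
    rw [← Fin.sum_univ_eq_sum_range G (2 * B)]
    refine Finset.sum_congr rfl fun i _ => ?_
    simp [G, i.isLt]
  rw [h1, sum_range_two_mul G B,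
    ← Fin.sum_univ_eq_sum_range (fun n => G (2 * n) + G (2 * n + 1)) B]
  refine Finset.sum_congr rfl fun q _ => ?_
  have hq := q.isLt
  simp only [G]
  rw [dif_pos (show 2 * (q : ℕ) < 2 * B by omega),
    dif_pos (show 2 * (q : ℕ) + 1 < 2 * B by omega)]

section

/- Parameters: γ = κ, α = κ + a2, β = b1 + δ. -/
variable (κ a2 b1 δ : ℕ)
variable (Tb : Matrix (Fin κ) (Fin a2) (ZMod 2)) (Sb : Matrix (Fin δ) (Fin a2) (ZMod 2))
variable (T2 : Matrix (Fin κ) (Fin b1) (ZMod 4)) (Sq : Matrix (Fin δ) (Fin b1) (ZMod 4))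

/-- The codeword of the Z2Z4-additive code (case γ = κ) with generator matrix
𝒢 = [[I_κ, T_b | 2T_2, 0], [0, S_b | S_q, I_δ]] corresponding to the message
(u, v) ∈ Z2^κ × Z4^δ; this is (u,v)·𝒢. -/
def encodeFree (u : Fin κ → ZMod 2) (v : Fin δ → ZMod 4) : Vab (κ + a2) (b1 + δ) :=
  (Fin.append u (fun i => ∑ j, u j * Tb j i + ∑ l, toZ2 (v l) * Sb l i),
   Fin.append (fun i => ∑ j, 2 * toZ4 (u j) * T2 j i + ∑ l, v l * Sq l i) v)

/-- The information set I = {1,…,κ} ∪ {α+2(β−δ)+1,…,α+2β} in binary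
coordinates, as an injection. -/
def Ifree : Fin (κ + 2 * δ) → Fin ((κ + a2) + 2 * (b1 + δ)) := fun m =>
  ⟨if (m : ℕ) < κ then (m : ℕ) else (κ + a2) + 2 * b1 + ((m : ℕ) - κ),
   by have := m.isLt; split_ifs <;> omega⟩

/-- The Lee weight on Z4. -/
def leeWt (a : ZMod 4) : ℕ :=
  if a = 0 then 0 else if a = 2 then 2 else 1

lemma leeWt_sub_eq : ∀ a b : ZMod 4,
    leeWt (a - b) =
      ((if (gray a).1 ≠ (gray b).1 then 1 else 0) +
       (if (gray a).2 ≠ (gray b).2 then 1 else 0)) := by decide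

/-- The binary part of the syndrome ℋ·wᵀ, coming from the rows
[T_bᵀ, I_{α−κ} | 0, 2S_bᵀ] of ℋ. -/
def syndB (w : Vab (κ + a2) (b1 + δ)) : Fin a2 → ZMod 2 := fun i =>
  (∑ j, Tb j i * w.1 (Fin.castAdd a2 j)) + w.1 (Fin.natAdd κ i)
    + ∑ l, Sb l i * toZ2 (w.2 (Fin.natAdd b1 l))

/-- The quaternary part of the syndrome ℋ·wᵀ, coming from the rows
[T_2ᵀ, 0 | I_{β+κ−γ−δ}, −S_qᵀ] of ℋ. -/
def syndQ (w : Vab (κ + a2) (b1 + δ)) : Fin b1 → ZMod 4 := fun i =>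
  (∑ j, T2 j i * (2 * toZ4 (w.1 (Fin.castAdd a2 j)))) + w.2 (Fin.castAdd δ i)
    - ∑ l, Sq l i * w.2 (Fin.natAdd b1 l)

lemma synd_eq_dist (w : Vab (κ + a2) (b1 + δ)) :
    hammingNorm (syndB κ a2 b1 δ Tb Sb w) + ∑ i, leeWt (syndQ κ a2 b1 δ T2 Sq w i) =
      hammingDist (Phi _ _ w)
        (Phi _ _ (encodeFree κ a2 b1 δ Tb Sb T2 Sq
          (fun j => w.1 (Fin.castAdd a2 j)) (fun l => w.2 (Fin.natAdd b1 l)))) := by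
  classical
  set c' := encodeFree κ a2 b1 δ Tb Sb T2 Sq
      (fun j => w.1 (Fin.castAdd a2 j)) (fun l => w.2 (Fin.natAdd b1 l)) with hc'
  -- pointwise facts
  have hb : ∀ i : Fin a2,
      syndB κ a2 b1 δ Tb Sb w i = w.1 (Fin.natAdd κ i) - c'.1 (Fin.natAdd κ i) := by
    intro i
    simp only [syndB, hc', encodeFree, Fin.append_right]
    rw [Finset.sum_congr rfl (fun j _ => mul_comm (Tb j i) (w.1 (Fin.castAdd a2 j))),
      Finset.sum_congr rfl (fun l _ => mul_comm (Sb l i) (toZ2 (w.2 (Fin.natAdd b1 l))))]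
    have : ∀ x : ZMod 2, -x = x := by decide
    rw [sub_eq_add_neg, this]
    ring
  have hq : ∀ i : Fin b1,
      syndQ κ a2 b1 δ T2 Sq w i = w.2 (Fin.castAdd δ i) - c'.2 (Fin.castAdd δ i) := by
    intro i
    simp only [syndQ, hc', encodeFree, Fin.append_left]
    have key : ∀ c s : ZMod 4, c * (2 * s) = -(2 * s * c) := by decide
    rw [Finset.sum_congr rfl
        (fun j _ => key (T2 j i) (toZ4 (w.1 (Fin.castAdd a2 j)))),
      Finset.sum_neg_distrib,
      Finset.sum_congr rfl (fun l _ => mul_comm (Sq l i) (w.2 (Fin.natAdd b1 l)))]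
    ring
  -- expand the hamming distance
  rw [hammingDist, Finset.card_filter, Fin.sum_univ_add
    (fun p : Fin ((κ + a2) + 2 * (b1 + δ)) =>
      if Phi _ _ w p ≠ Phi _ _ c' p then 1 else 0)]
  rw [Fin.sum_univ_add (fun i : Fin (κ + a2) =>
      if Phi _ _ w (Fin.castAdd (2 * (b1 + δ)) i) ≠ Phi _ _ c' (Fin.castAdd (2 * (b1 + δ)) i)
      then 1 else 0)]
  have hS1 : ∑ i : Fin κ,
      (if Phi _ _ w (Fin.castAdd (2 * (b1 + δ)) (Fin.castAdd a2 i)) ≠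
          Phi _ _ c' (Fin.castAdd (2 * (b1 + δ)) (Fin.castAdd a2 i)) then 1 else 0) = 0 := by
    refine Finset.sum_eq_zero fun i _ => ?_
    have hlt : ((Fin.castAdd (2 * (b1 + δ)) (Fin.castAdd a2 i) : Fin _) : ℕ) < κ + a2 := by
      simp; omega
    rw [Phi_lt _ _ hlt, Phi_lt _ _ hlt]
    have hfe : (⟨((Fin.castAdd (2 * (b1 + δ)) (Fin.castAdd a2 i) : Fin _) : ℕ), hlt⟩ :
        Fin (κ + a2)) = Fin.castAdd a2 i := Fin.ext (by simp)
    rw [hfe]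
    simp [hc', encodeFree, Fin.append_left]
  have hS2 : ∑ i : Fin a2,
      (if Phi _ _ w (Fin.castAdd (2 * (b1 + δ)) (Fin.natAdd κ i)) ≠
          Phi _ _ c' (Fin.castAdd (2 * (b1 + δ)) (Fin.natAdd κ i)) then 1 else 0) =
      hammingNorm (syndB κ a2 b1 δ Tb Sb w) := by
    rw [hammingNorm, Finset.card_filter]
    refine Finset.sum_congr rfl fun i _ => ?_
    have hlt : ((Fin.castAdd (2 * (b1 + δ)) (Fin.natAdd κ i) : Fin _) : ℕ) < κ + a2 := by
      simp only [Fin.coe_castAdd, Fin.coe_natAdd]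
      have := i.isLt; omega
    rw [Phi_lt _ _ hlt, Phi_lt _ _ hlt]
    have hfe : (⟨((Fin.castAdd (2 * (b1 + δ)) (Fin.natAdd κ i) : Fin _) : ℕ), hlt⟩ :
        Fin (κ + a2)) = Fin.natAdd κ i := Fin.ext (by simp)
    rw [hfe, hb i]
    by_cases hcase : w.1 (Fin.natAdd κ i) = c'.1 (Fin.natAdd κ i) <;>
      simp [hcase, sub_eq_zero]
  have hS3 : ∑ i : Fin (2 * (b1 + δ)),
      (if Phi _ _ w (Fin.natAdd (κ + a2) i) ≠ Phi _ _ c' (Fin.natAdd (κ + a2) i)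
       then 1 else 0) = ∑ i, leeWt (syndQ κ a2 b1 δ T2 Sq w i) := by
    rw [fin_sum_two_mul (b1 + δ) (fun i =>
      if Phi _ _ w (Fin.natAdd (κ + a2) i) ≠ Phi _ _ c' (Fin.natAdd (κ + a2) i)
      then 1 else 0)]
    have hpt : ∀ q : Fin (b1 + δ),
        ((if Phi _ _ w (Fin.natAdd (κ + a2) ⟨2 * (q : ℕ), by have := q.isLt; omega⟩) ≠
             Phi _ _ c' (Fin.natAdd (κ + a2) ⟨2 * (q : ℕ), by have := q.isLt; omega⟩)
          then 1 else 0) +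
         (if Phi _ _ w (Fin.natAdd (κ + a2) ⟨2 * (q : ℕ) + 1, by have := q.isLt; omega⟩) ≠
             Phi _ _ c' (Fin.natAdd (κ + a2) ⟨2 * (q : ℕ) + 1, by have := q.isLt; omega⟩)
          then 1 else 0)) = leeWt (w.2 q - c'.2 q) := by
      intro q
      have he0 : ((Fin.natAdd (κ + a2) (⟨2 * (q : ℕ), by have := q.isLt; omega⟩ :
          Fin (2 * (b1 + δ))) : Fin _) : ℕ) = (κ + a2) + 2 * (q : ℕ) := by simp
      have he1 : ((Fin.natAdd (κ + a2) (⟨2 * (q : ℕ) + 1, by have := q.isLt; omega⟩ :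
          Fin (2 * (b1 + δ))) : Fin _) : ℕ) = (κ + a2) + 2 * (q : ℕ) + 1 := by simp; omega
      rw [Phi_even _ _ q he0, Phi_even _ _ q he0, Phi_odd _ _ q he1, Phi_odd _ _ q he1,
        leeWt_sub_eq]
    rw [Finset.sum_congr rfl (fun q _ => hpt q)]
    rw [Fin.sum_univ_add (fun q : Fin (b1 + δ) => leeWt (w.2 q - c'.2 q))]
    have hz : ∑ l : Fin δ, leeWt (w.2 (Fin.natAdd b1 l) - c'.2 (Fin.natAdd b1 l)) = 0 := by
      refine Finset.sum_eq_zero fun l _ => ?_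
      simp [hc', encodeFree, Fin.append_right, leeWt]
    rw [hz, add_zero]
    refine Finset.sum_congr rfl fun i _ => ?_
    rw [hq i]
  rw [hS1, hS2, hS3]
  omega

lemma phi_encode_agree (w : Vab (κ + a2) (b1 + δ)) (m : Fin (κ + 2 * δ)) :
    Phi _ _ (encodeFree κ a2 b1 δ Tb Sb T2 Sq
        (fun j => w.1 (Fin.castAdd a2 j)) (fun l => w.2 (Fin.natAdd b1 l)))
      (Ifree κ a2 b1 δ m) = Phi _ _ w (Ifree κ a2 b1 δ m) := by
  classical
  set c' := encodeFree κ a2 b1 δ Tb Sb T2 Sq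
      (fun j => w.1 (Fin.castAdd a2 j)) (fun l => w.2 (Fin.natAdd b1 l)) with hc'
  by_cases hm : (m : ℕ) < κ
  · have hv : ((Ifree κ a2 b1 δ m : Fin _) : ℕ) = (m : ℕ) := by simp [Ifree, hm]
    have h1 : ((Ifree κ a2 b1 δ m : Fin _) : ℕ) < κ + a2 := by omega
    rw [Phi_lt _ _ h1, Phi_lt _ _ h1]
    have hfe : (⟨((Ifree κ a2 b1 δ m : Fin _) : ℕ), h1⟩ : Fin (κ + a2)) =
        Fin.castAdd a2 ⟨(m : ℕ), hm⟩ := Fin.ext (by simp [hv])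
    rw [hfe]
    rw [hc']
    simp only [encodeFree]
    exact Fin.append_left _ _ ⟨(m : ℕ), hm⟩
  · have hmlt := m.isLt
    have hl : ((m : ℕ) - κ) / 2 < δ := by omega
    set l : Fin δ := ⟨((m : ℕ) - κ) / 2, hl⟩ with hldef
    have hv : ((Ifree κ a2 b1 δ m : Fin _) : ℕ) = (κ + a2) + 2 * b1 + ((m : ℕ) - κ) := by
      simp [Ifree, hm]
    have hq : ((Fin.natAdd b1 l : Fin (b1 + δ)) : ℕ) = b1 + ((m : ℕ) - κ) / 2 := by simp [hldef]
    have hagree : c'.2 (Fin.natAdd b1 l) = w.2 (Fin.natAdd b1 l) := by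
      simp [hc', encodeFree, Fin.append_right]
    rcases Nat.even_or_odd ((m : ℕ) - κ) with he | ho
    · obtain ⟨r, hr⟩ := he
      have hpos : ((Ifree κ a2 b1 δ m : Fin _) : ℕ) =
          (κ + a2) + 2 * ((Fin.natAdd b1 l : Fin (b1 + δ)) : ℕ) := by
        rw [hq]; omega
      rw [Phi_even _ _ (Fin.natAdd b1 l) hpos, Phi_even _ _ (Fin.natAdd b1 l) hpos, hagree]
    · obtain ⟨r, hr⟩ := ho
      have hpos : ((Ifree κ a2 b1 δ m : Fin _) : ℕ) =
          (κ + a2) + 2 * ((Fin.natAdd b1 l : Fin (b1 + δ)) : ℕ) + 1 := by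
        rw [hq]; omega
      rw [Phi_odd _ _ (Fin.natAdd b1 l) hpos, Phi_odd _ _ (Fin.natAdd b1 l) hpos, hagree]

lemma info_eq_of_agree (w w' : Vab (κ + a2) (b1 + δ))
    (h : ∀ m : Fin (κ + 2 * δ),
      Phi _ _ w (Ifree κ a2 b1 δ m) = Phi _ _ w' (Ifree κ a2 b1 δ m)) :
    (∀ j : Fin κ, w.1 (Fin.castAdd a2 j) = w'.1 (Fin.castAdd a2 j)) ∧
    (∀ l : Fin δ, w.2 (Fin.natAdd b1 l) = w'.2 (Fin.natAdd b1 l)) := by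
  constructor
  · intro j
    have hj := j.isLt
    set m : Fin (κ + 2 * δ) := ⟨(j : ℕ), by omega⟩ with hmdef
    have hv : ((Ifree κ a2 b1 δ m : Fin _) : ℕ) = (j : ℕ) := by simp [Ifree, hmdef, hj]
    have h1 : ((Ifree κ a2 b1 δ m : Fin _) : ℕ) < κ + a2 := by omega
    have hfe : (⟨((Ifree κ a2 b1 δ m : Fin _) : ℕ), h1⟩ : Fin (κ + a2)) =
        Fin.castAdd a2 j := Fin.ext (by simp [hv])
    have := h m
    rwa [Phi_lt _ _ h1, Phi_lt _ _ h1, hfe] at this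
  · intro l
    have hl := l.isLt
    set q : Fin (b1 + δ) := Fin.natAdd b1 l with hqdef
    set m0 : Fin (κ + 2 * δ) := ⟨κ + 2 * (l : ℕ), by omega⟩ with hm0
    set m1 : Fin (κ + 2 * δ) := ⟨κ + 2 * (l : ℕ) + 1, by omega⟩ with hm1
    have hc0 : ¬ (κ + 2 * (l : ℕ) < κ) := by omega
    have hc1 : ¬ (κ + 2 * (l : ℕ) + 1 < κ) := by omega
    have hv0 : ((Ifree κ a2 b1 δ m0 : Fin _) : ℕ) = (κ + a2) + 2 * (q : ℕ) := by
      simp [Ifree, hm0, hqdef, hc0]; omega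
    have hv1 : ((Ifree κ a2 b1 δ m1 : Fin _) : ℕ) = (κ + a2) + 2 * (q : ℕ) + 1 := by
      simp [Ifree, hm1, hqdef, hc1]; omega
    have h0 := h m0
    have h1 := h m1
    rw [Phi_even _ _ q hv0, Phi_even _ _ q hv0] at h0
    rw [Phi_odd _ _ q hv1, Phi_odd _ _ q hv1] at h1
    exact gray_injective (Prod.ext h0 h1)

/-- Let 𝒞 be a t-error-correcting Z2Z4-additive code of type (α,β;γ,δ;κ) with
γ = κ, parity check matrix ℋ = [[T_bᵀ, I_{α−κ}, 0, 2S_bᵀ],[T_2ᵀ, 0, I, −S_qᵀ]],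
and C = Φ(𝒞) with standard information set J.  If y = x + e with x ∈ C and
wt(e) ≤ t, then the Lee weight of the syndrome ℋ·Φ⁻¹(y)ᵀ is at most t if and
only if wt(e_J) = 0. -/
theorem syndrome_lee_weight_iff (t : ℕ)
    (C : Set (Fin ((κ + a2) + 2 * (b1 + δ)) → ZMod 2))
    (hC : C = {v | ∃ u z, v = Phi _ _ (encodeFree κ a2 b1 δ Tb Sb T2 Sq u z)})
    (hdist : ∀ c₁ ∈ C, ∀ c₂ ∈ C, c₁ ≠ c₂ → 2 * t < hammingDist c₁ c₂)
    (x e y : Fin ((κ + a2) + 2 * (b1 + δ)) → ZMod 2)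
    (hx : x ∈ C) (he : hammingNorm e ≤ t) (hy : y = x + e)
    (w : Vab (κ + a2) (b1 + δ)) (hw : Phi _ _ w = y) :
    hammingNorm (syndB κ a2 b1 δ Tb Sb w) + ∑ i, leeWt (syndQ κ a2 b1 δ T2 Sq w i) ≤ t ↔
      ∀ m : Fin (κ + 2 * δ), e (Ifree κ a2 b1 δ m) = 0 := by
  classical
  subst hy
  subst hC
  obtain ⟨u, z, hxe⟩ := hx
  have hwxe : Phi _ _ w = x + e := hw
  set c' := encodeFree κ a2 b1 δ Tb Sb T2 Sq
      (fun j => w.1 (Fin.castAdd a2 j)) (fun l => w.2 (Fin.natAdd b1 l)) with hc'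
  have hL := synd_eq_dist κ a2 b1 δ Tb Sb T2 Sq w
  rw [← hc'] at hL
  have hdyx : hammingDist (Phi _ _ w) x = hammingNorm e := by
    rw [hammingDist_eq_hammingNorm, hwxe]
    congr 1
    funext i
    have hz2 : ∀ a b : ZMod 2, -(a + b) + a = b := by decide
    simp only [Pi.add_apply, Pi.neg_apply]
    exact hz2 (x i) (e i)
  constructor
  · intro hsyn m
    have hJ := phi_encode_agree κ a2 b1 δ Tb Sb T2 Sq w
    rw [← hc'] at hJ
    have hdist_wx' : hammingDist (Phi _ _ w) (Phi _ _ c') ≤ t := by omega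
    have hx'mem : Phi _ _ c' ∈
        {v | ∃ u z, v = Phi _ _ (encodeFree κ a2 b1 δ Tb Sb T2 Sq u z)} := ⟨_, _, rfl⟩
    have hxx' : x = Phi _ _ c' := by
      by_contra hne
      have hgt := hdist x ⟨u, z, hxe⟩ (Phi _ _ c') hx'mem hne
      have tri := hammingDist_triangle x (Phi _ _ w) (Phi _ _ c')
      rw [hammingDist_comm x (Phi _ _ w)] at tri
      omega
    have h1 : Phi _ _ w (Ifree κ a2 b1 δ m) = x (Ifree κ a2 b1 δ m) := by
      rw [← (hJ m), ← hxx']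
    have h2 : x (Ifree κ a2 b1 δ m) + e (Ifree κ a2 b1 δ m) = x (Ifree κ a2 b1 δ m) := by
      rw [← Pi.add_apply x e (Ifree κ a2 b1 δ m), ← hwxe]
      exact h1
    exact add_eq_left.mp h2
  · intro hzero
    set wc := encodeFree κ a2 b1 δ Tb Sb T2 Sq u z with hwc
    have hagree : ∀ m : Fin (κ + 2 * δ),
        Phi _ _ w (Ifree κ a2 b1 δ m) = Phi _ _ wc (Ifree κ a2 b1 δ m) := by
      intro m
      have : Phi _ _ w (Ifree κ a2 b1 δ m) =
          x (Ifree κ a2 b1 δ m) + e (Ifree κ a2 b1 δ m) := by rw [hwxe]; rfl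
      rw [this, hzero m, add_zero, hxe, hwc]
    obtain ⟨hb, hq⟩ := info_eq_of_agree κ a2 b1 δ w wc hagree
    have hu : (fun j => w.1 (Fin.castAdd a2 j)) = u := by
      funext j
      rw [hb j, hwc]
      simp only [encodeFree]
      exact Fin.append_left _ _ j
    have hz : (fun l => w.2 (Fin.natAdd b1 l)) = z := by
      funext l
      rw [hq l, hwc]
      simp only [encodeFree]
      exact Fin.append_right _ _ l
    have hcx : c' = wc := by rw [hc', hu, hz, hwc]
    rw [hL, hcx, ← hxe, hdyx]
    exact he


end
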